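/- Let P(ρ) = ρ^p ∫₀^∞ exp(-ρu) μ(u) du, where p ≥ 0, μ is nonnegative and measurable, μ(u) = 0 for u < d²/4 for some d > 0, and the integral is finite for all ρ > 0. Then P''(ρ) ≥ 0 for all ρ ≥ ρ₀ := 4(p + √p)/d². -/

import Mathlib

open MeasureTheory Set Real Filter Metric Topology

private lemma aux_pow_exp_le (n : ℕ) {c u : ℝ} (hc : 0 < c) (hu : 0 ≤ u) :
    u ^ n * Real.exp (-(c * u)) ≤ n.factorial / c ^ n := by
  have h := Real.pow_div_factorial_le_exp (c*u) (mul_nonneg hc.le hu) n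
  have hfac : (0:ℝ) < n.factorial := by positivity
  have hcn : (0:ℝ) < c ^ n := by positivity
  have he := Real.exp_pos (c * u)
  rw [div_le_iff₀ hfac, mul_pow] at h
  rw [Real.exp_neg, div_eq_mul_inv]
  rw [mul_inv_le_iff₀ he]
  calc n.factorial * (c^n)⁻¹ * Real.exp (c*u) = (n.factorial * Real.exp (c*u)) * (c^n)⁻¹ := by ring
    _ ≥ (c^n * u^n) * (c^n)⁻¹ := by
        apply mul_le_mul_of_nonneg_right _ (by positivity)
        linarith
    _ = u ^ n := by field_simp

private lemma aux_integrable (μ : ℝ → ℝ) (hμ_meas : Measurable μ) (hμ_nonneg : ∀ u, 0 ≤ μ u)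
    (hint : ∀ ρ : ℝ, 0 < ρ →
      Integrable (fun u => Real.exp (-ρ * u) * μ u) (volume.restrict (Set.Ioi 0)))
    (n : ℕ) {c : ℝ} (hc : 0 < c) :
    Integrable (fun u => u ^ n * Real.exp (-c * u) * μ u) (volume.restrict (Set.Ioi 0)) := by
  have h2 : (0:ℝ) < c/2 := by linarith
  refine Integrable.mono' ((hint (c/2) h2).const_mul ((n.factorial : ℝ) / (c/2)^n)) ?_ ?_
  · exact (((measurable_id.pow_const n).mul ((measurable_id.const_mul (-c)).exp)).mul
      hμ_meas).aestronglyMeasurable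
  · rw [ae_restrict_iff' measurableSet_Ioi]
    filter_upwards with u hu
    have hu0 : (0:ℝ) ≤ u := le_of_lt hu
    have key : u ^ n * Real.exp (-c * u) ≤ (n.factorial / (c/2)^n) * Real.exp (-(c/2) * u) := by
      have : Real.exp (-c * u) = Real.exp (-(c/2 * u)) * Real.exp (-(c/2) * u) := by
        rw [← Real.exp_add]; ring_nf
      rw [this, ← mul_assoc]
      exact mul_le_mul_of_nonneg_right (aux_pow_exp_le n h2 hu0) (Real.exp_pos _).le
    have hnorm : ‖u ^ n * Real.exp (-c * u) * μ u‖ = u ^ n * Real.exp (-c * u) * μ u := by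
      rw [Real.norm_eq_abs, abs_of_nonneg]
      exact mul_nonneg (mul_nonneg (pow_nonneg hu0 n) (Real.exp_pos _).le) (hμ_nonneg u)
    rw [hnorm, mul_assoc]
    calc u ^ n * (Real.exp (-c * u) * μ u)
        = (u ^ n * Real.exp (-c*u)) * μ u := by ring
      _ ≤ ((n.factorial / (c/2)^n) * Real.exp (-(c/2) * u)) * μ u :=
          mul_le_mul_of_nonneg_right key (hμ_nonneg u)
      _ = (n.factorial / (c/2)^n) * (Real.exp (-(c/2) * u) * μ u) := by ring

private lemma aux_hasDerivAt (μ : ℝ → ℝ) (hμ_meas : Measurable μ) (hμ_nonneg : ∀ u, 0 ≤ μ u)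
    (hint : ∀ ρ : ℝ, 0 < ρ →
      Integrable (fun u => Real.exp (-ρ * u) * μ u) (volume.restrict (Set.Ioi 0)))
    (n : ℕ) {x : ℝ} (hx : 0 < x) :
    HasDerivAt (fun y => ∫ u in Set.Ioi (0:ℝ), u ^ n * Real.exp (-y * u) * μ u)
      (-∫ u in Set.Ioi (0:ℝ), u ^ (n+1) * Real.exp (-x * u) * μ u) x := by
  have h4 : (0:ℝ) < x/4 := by linarith
  set C : ℝ := ((n+1).factorial : ℝ) / (x/4)^(n+1) with hC
  have key := hasDerivAt_integral_of_dominated_loc_of_deriv_le (𝕜 := ℝ)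
    (μ := volume.restrict (Set.Ioi 0))
    (F := fun y u => u ^ n * Real.exp (-y * u) * μ u)
    (F' := fun y u => -(u ^ (n+1) * Real.exp (-y * u) * μ u))
    (x₀ := x) (s := ball x (x/2))
    (bound := fun u => C * (Real.exp (-(x/4) * u) * μ u))
    (ball_mem_nhds x (by linarith))
    (Eventually.of_forall fun y =>
      (((measurable_id.pow_const n).mul ((measurable_id.const_mul (-y)).exp)).mul
        hμ_meas).aestronglyMeasurable)
    (aux_integrable μ hμ_meas hμ_nonneg hint n hx)
    ((((measurable_id.pow_const (n+1)).mul ((measurable_id.const_mul (-x)).exp)).mul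
        hμ_meas).neg.aestronglyMeasurable)
    ?_ ((hint (x/4) h4).const_mul C) ?_
  · have := key.2
    rwa [MeasureTheory.integral_neg] at this
  · -- bound
    rw [ae_restrict_iff' measurableSet_Ioi]
    filter_upwards with u hu
    intro y hy
    have hu0 : (0:ℝ) ≤ u := le_of_lt hu
    have hy2 : x/2 ≤ y := by
      have := abs_lt.1 (mem_ball_iff_norm.1 hy)
      linarith [this.1]
    have hexp : Real.exp (-y * u) ≤ Real.exp (-(x/2) * u) := by
      apply Real.exp_le_exp.2
      nlinarith
    have keyb : u ^ (n+1) * Real.exp (-(x/2) * u) ≤ C * Real.exp (-(x/4) * u) := by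
      have : Real.exp (-(x/2) * u) = Real.exp (-(x/4 * u)) * Real.exp (-(x/4) * u) := by
        rw [← Real.exp_add]; ring_nf
      rw [this, ← mul_assoc]
      exact mul_le_mul_of_nonneg_right (aux_pow_exp_le (n+1) h4 hu0) (Real.exp_pos _).le
    have hnn : (0:ℝ) ≤ u ^ (n+1) * Real.exp (-y * u) * μ u :=
      mul_nonneg (mul_nonneg (pow_nonneg hu0 _) (Real.exp_pos _).le) (hμ_nonneg u)
    rw [norm_neg, Real.norm_eq_abs, abs_of_nonneg hnn]
    calc u ^ (n+1) * Real.exp (-y * u) * μ u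
        ≤ u ^ (n+1) * Real.exp (-(x/2) * u) * μ u := by
          apply mul_le_mul_of_nonneg_right _ (hμ_nonneg u)
          exact mul_le_mul_of_nonneg_left hexp (pow_nonneg hu0 _)
      _ ≤ (C * Real.exp (-(x/4) * u)) * μ u := mul_le_mul_of_nonneg_right keyb (hμ_nonneg u)
      _ = C * (Real.exp (-(x/4) * u) * μ u) := by ring
  · -- differentiability
    filter_upwards with u
    intro y _
    have h1 : HasDerivAt (fun y : ℝ => -y * u) (-u) y := by
      simpa using ((hasDerivAt_id y).neg.mul_const u)
    have h2 : HasDerivAt (fun y : ℝ => Real.exp (-y * u)) (Real.exp (-y*u) * -u) y := h1.exp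
    have h3 := (h2.const_mul (u ^ n)).mul_const (μ u)
    refine h3.congr_deriv ?_
    ring

/-- If `P(ρ) = ρ^p ∫₀^∞ e^{-ρu} μ(u) du` with `p ≥ 0`, `μ` nonnegative measurable
vanishing below `d²/4`, and the integral finite for all `ρ > 0`, then
`P''(ρ) ≥ 0` whenever `ρ ≥ 4(p + √p)/d²`. -/
theorem second_deriv_nonneg_of_laplace_rep (p d : ℝ) (μ : ℝ → ℝ) (P : ℝ → ℝ)
    (hp : 0 ≤ p) (hd : 0 < d)
    (hμ_meas : Measurable μ) (hμ_nonneg : ∀ u, 0 ≤ μ u)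
    (hμ_supp : ∀ u, u < d ^ 2 / 4 → μ u = 0)
    (hint : ∀ ρ : ℝ, 0 < ρ →
      Integrable (fun u => Real.exp (-ρ * u) * μ u) (volume.restrict (Set.Ioi 0)))
    (hP : ∀ ρ : ℝ, 0 < ρ → P ρ = ρ ^ p * ∫ u in Set.Ioi (0 : ℝ), Real.exp (-ρ * u) * μ u) :
    ∀ ρ : ℝ, 4 * (p + Real.sqrt p) / d ^ 2 ≤ ρ → 0 ≤ iteratedDeriv 2 P ρ := by
  intro ρ hρ₀
  -- notation
  set F : ℕ → ℝ → ℝ := fun n x => ∫ u in Set.Ioi (0:ℝ), u ^ n * Real.exp (-x * u) * μ u with hFdef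
  have hd0 : ∀ x : ℝ, 0 < x → HasDerivAt (F 0) (-(F 1 x)) x := fun x hx =>
    aux_hasDerivAt μ hμ_meas hμ_nonneg hint 0 hx
  have hd1 : ∀ x : ℝ, 0 < x → HasDerivAt (F 1) (-(F 2 x)) x := fun x hx =>
    aux_hasDerivAt μ hμ_meas hμ_nonneg hint 1 hx
  have hPF : ∀ x : ℝ, 0 < x → P x = x ^ p * F 0 x := by
    intro x hx
    rw [hP x hx, hFdef]
    simp
  have hit2 : iteratedDeriv 2 P ρ = deriv (deriv P) ρ := by
    rw [iteratedDeriv_succ, iteratedDeriv_one]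
  rw [hit2]
  rcases lt_or_ge 0 ρ with hρ | hρneg
  · -- main case ρ > 0
    set Q : ℝ → ℝ := fun x => x ^ p * F 0 x with hQdef
    set Q1 : ℝ → ℝ := fun x => p * x ^ (p-1) * F 0 x - x ^ p * F 1 x with hQ1def
    have hQd : ∀ x : ℝ, 0 < x → HasDerivAt Q (Q1 x) x := by
      intro x hx
      have h := (Real.hasDerivAt_rpow_const (p := p) (Or.inl hx.ne')).fun_mul (hd0 x hx)
      refine h.congr_deriv ?_
      simp [hQ1def]; ring
    -- second derivative value
    set K : ℝ := p * (p-1) * ρ ^ (p-2) * F 0 ρ - 2 * (p * ρ ^ (p-1)) * F 1 ρ + ρ ^ p * F 2 ρ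
      with hKdef
    have hQ1d : HasDerivAt Q1 K ρ := by
      have hA : HasDerivAt (fun x : ℝ => p * x ^ (p-1) * F 0 x)
          ((p * ((p-1) * ρ ^ (p-1-1))) * F 0 ρ + (p * ρ ^ (p-1)) * (-(F 1 ρ))) ρ := by
        have h := (((Real.hasDerivAt_rpow_const (p := p-1) (Or.inl hρ.ne'))).const_mul p).fun_mul
          (hd0 ρ hρ)
        exact h
      have hB : HasDerivAt (fun x : ℝ => x ^ p * F 1 x)
          ((p * ρ ^ (p-1)) * F 1 ρ + ρ ^ p * (-(F 2 ρ))) ρ :=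
        (Real.hasDerivAt_rpow_const (p := p) (Or.inl hρ.ne')).mul (hd1 ρ hρ)
      have h := hA.fun_sub hB
      have hexp : p - 1 - 1 = p - 2 := by ring
      rw [hexp] at h
      refine h.congr_deriv ?_
      rw [hKdef]; ring
    -- deriv (deriv P) ρ = K
    have hmemnhds : Set.Ioi (0:ℝ) ∈ 𝓝 ρ := Ioi_mem_nhds hρ
    have hPQ : P =ᶠ[𝓝 ρ] Q := by
      filter_upwards [hmemnhds] with x hx
      exact hPF x hx
    have hdPQ1 : deriv P =ᶠ[𝓝 ρ] Q1 := by
      have h1 : deriv P =ᶠ[𝓝 ρ] deriv Q := hPQ.deriv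
      have h2 : deriv Q =ᶠ[𝓝 ρ] Q1 := by
        filter_upwards [hmemnhds] with x hx
        exact (hQd x hx).deriv
      exact h1.trans h2
    have hfinal : deriv (deriv P) ρ = K := by
      rw [hdPQ1.deriv_eq]
      exact hQ1d.deriv
    rw [hfinal]
    -- K as a single integral
    have hi0 := (aux_integrable μ hμ_meas hμ_nonneg hint 0 hρ).const_mul (p * (p-1) * ρ ^ (p-2))
    have hi1 := (aux_integrable μ hμ_meas hμ_nonneg hint 1 hρ).const_mul (2 * (p * ρ ^ (p-1)))
    have hi2 := (aux_integrable μ hμ_meas hμ_nonneg hint 2 hρ).const_mul (ρ ^ p)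
    have hi01 : Integrable (fun u : ℝ => p * (p-1) * ρ ^ (p-2) * (u^0 * Real.exp (-ρ*u) * μ u)
        - 2 * (p * ρ ^ (p-1)) * (u^1 * Real.exp (-ρ*u) * μ u)) (volume.restrict (Set.Ioi 0)) :=
      hi0.sub hi1
    have hKint : K = ∫ u in Set.Ioi (0:ℝ),
        (p * (p-1) * ρ ^ (p-2) * (u^0 * Real.exp (-ρ*u) * μ u)
        - 2 * (p * ρ ^ (p-1)) * (u^1 * Real.exp (-ρ*u) * μ u)
        + ρ ^ p * (u^2 * Real.exp (-ρ*u) * μ u)) := by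
      rw [MeasureTheory.integral_add hi01 hi2, MeasureTheory.integral_sub hi0 hi1,
        MeasureTheory.integral_const_mul, MeasureTheory.integral_const_mul,
        MeasureTheory.integral_const_mul]
    rw [hKint]
    apply MeasureTheory.setIntegral_nonneg measurableSet_Ioi
    intro u hu
    rcases lt_or_ge u (d^2/4) with hsmall | hbig
    · simp [hμ_supp u hsmall]
    · -- u ≥ d²/4 > 0
      have hρu : p + Real.sqrt p ≤ ρ * u := by
        have h1 : 4 * (p + Real.sqrt p) ≤ ρ * d^2 := by
          rw [div_le_iff₀ (by positivity)] at hρ₀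
          linarith
        nlinarith [Real.sqrt_nonneg p]
      have hquad : 0 ≤ (ρ * u - p)^2 - p := by
        nlinarith [Real.sq_sqrt hp, Real.sqrt_nonneg p]
      have h1 : ρ ^ (p-1) = ρ ^ (p-2) * ρ := by
        rw [show p - 1 = (p-2) + 1 by ring, Real.rpow_add hρ, Real.rpow_one]
      have h2 : ρ ^ p = ρ ^ (p-2) * ρ^(2:ℕ) := by
        rw [← Real.rpow_natCast ρ 2, ← Real.rpow_add hρ]
        norm_num
      have hkey : p * (p-1) * ρ ^ (p-2) * (u^0 * Real.exp (-ρ*u) * μ u)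
          - 2 * (p * ρ ^ (p-1)) * (u^1 * Real.exp (-ρ*u) * μ u)
          + ρ ^ p * (u^2 * Real.exp (-ρ*u) * μ u)
          = ρ ^ (p-2) * (Real.exp (-ρ*u) * μ u) * ((ρ*u - p)^2 - p) := by
        rw [h1, h2]; ring
      rw [hkey]
      exact mul_nonneg (mul_nonneg (Real.rpow_nonneg hρ.le _)
        (mul_nonneg (Real.exp_pos _).le (hμ_nonneg u))) hquad
  · -- boundary case: ρ ≤ 0 forces ρ = 0 and p = 0
    have hρ0nn : 0 ≤ 4 * (p + Real.sqrt p) / d ^ 2 := by positivity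
    have hρ0 : ρ = 0 := le_antisymm hρneg (le_trans hρ0nn hρ₀)
    have hpsum : p + Real.sqrt p ≤ 0 := by
      by_contra hcon
      push_neg at hcon
      have : 0 < 4 * (p + Real.sqrt p) / d ^ 2 := by positivity
      linarith [hρ₀, hρ0 ▸ hρ₀]
    have hp0 : p = 0 := le_antisymm (by nlinarith [Real.sqrt_nonneg p]) hp
    subst hρ0
    set g : ℝ → ℝ := deriv P with hgdef
    -- g = -(F 1) on Ioi 0
    have hgF : ∀ x : ℝ, 0 < x → g x = -(F 1 x) := by
      intro x hx
      have hPQ : P =ᶠ[𝓝 x] F 0 := by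
        filter_upwards [Ioi_mem_nhds hx] with y hy
        rw [hPF y hy, hp0, Real.rpow_zero, one_mul]
      rw [hgdef, hPQ.deriv_eq]
      exact (hd0 x hx).deriv
    -- F 2 nonneg
    have hF2 : ∀ x : ℝ, 0 ≤ F 2 x := by
      intro x
      apply MeasureTheory.setIntegral_nonneg measurableSet_Ioi
      intro u hu
      exact mul_nonneg (mul_nonneg (pow_nonneg (le_of_lt hu) 2) (Real.exp_pos _).le)
        (hμ_nonneg u)
    -- F 1 antitone on Ioi 0
    have hanti : AntitoneOn (F 1) (Set.Ioi 0) := by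
      apply antitoneOn_of_deriv_nonpos (convex_Ioi 0)
      · intro x hx
        exact (hd1 x hx).differentiableAt.continuousAt.continuousWithinAt
      · intro x hx
        rw [interior_Ioi] at hx
        exact (hd1 x hx).differentiableAt.differentiableWithinAt
      · intro x hx
        rw [interior_Ioi] at hx
        rw [(hd1 x hx).deriv]
        simp [hF2 x]
    have hmono : MonotoneOn g (Set.Ioi 0) := by
      intro a ha b hb hab
      rw [hgF a ha, hgF b hb]
      exact neg_le_neg (hanti ha hb hab)
    by_cases hdiff : DifferentiableAt ℝ g 0
    · have H : HasDerivAt g (deriv g 0) 0 := hdiff.hasDerivAt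
      -- g 0 ≤ g x for x > 0
      have hg0le : ∀ x : ℝ, 0 < x → g 0 ≤ g x := by
        intro x hx
        have htend : Tendsto g (𝓝[>] 0) (𝓝 (g 0)) :=
          (hdiff.continuousAt.continuousWithinAt (s := Set.Ioi 0)).tendsto
        apply le_of_tendsto htend
        filter_upwards [Ioo_mem_nhdsGT_of_mem (Set.left_mem_Ico.2 hx)] with t ht
        exact hmono ht.1 hx (le_of_lt ht.2)
      -- slope nonneg
      have Hs : HasDerivWithinAt g (deriv g 0) (Set.Ioi 0) 0 := H.hasDerivWithinAt
      rw [hasDerivWithinAt_iff_tendsto_slope] at Hs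
      have hset : Set.Ioi (0:ℝ) \ {0} = Set.Ioi 0 := by
        apply diff_singleton_eq_self
        simp
      rw [hset] at Hs
      refine ge_of_tendsto Hs ?_
      filter_upwards [self_mem_nhdsWithin] with t ht
      rw [slope_def_field, sub_zero]
      apply div_nonneg _ (le_of_lt ht)
      rw [sub_nonneg]
      exact hg0le t ht
    · rw [deriv_zero_of_not_differentiableAt hdiff]
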